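/- Suppose H : X → X is a homeomorphism of a locally compact separable metric measure space (X,d,μ) with μ(K) = c·μ(H⁻¹(K)) for all compact K (where c ∈ (0,1] is fixed), and d(x, H⁻¹(x)) ≤ t for all x ∈ X. If φ : X → [0,1] is measurable and (supp φ)_t is compact, then c·(φ∘H)μ and φμ both belong to 𝓜 and d_𝓜(c·(φ∘H)μ, φμ) ≤ t. -/

import Mathlib

open MeasureTheory Set Filter
open scoped ENNReal Classical

variable {X : Type*} [MetricSpace X] [MeasurableSpace X]

/-- Total mass of a measure, as a real number. -/
noncomputable def mass (ν : Measure X) : ℝ := (ν Set.univ).toReal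

/-- The support of a measure. -/
def msupp (ν : Measure X) : Set X := {x : X | ∀ ε : ℝ, 0 < ε → 0 < ν (Metric.ball x ε)}

/-- The set `𝓜` of measures dominated by `μ` with compact support. -/
def MM (μ : Measure X) : Set (Measure X) := {ν | ν ≤ μ ∧ IsCompact (msupp ν)}

/-- Gauge function `h` used in the definition of the mass transport metric. -/
def IsGauge (h : ℝ → ℝ) : Prop :=
  StrictMonoOn h (Set.Ici 0) ∧ ContinuousOn h (Set.Ici 0) ∧ h 0 = 0 ∧
  Tendsto (fun ε => h ε / ε) (nhdsWithin 0 (Set.Ioi 0)) (nhds 0) ∧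
  (∀ a b : ℝ, 0 ≤ a → 0 ≤ b → h a + h b ≤ h (a + b)) ∧
  Tendsto h atTop atTop

/-- `Γ_{ε,δ}(ν,η) ≠ ∅`: existence of a countable mass-transport decomposition. -/
def GammaDecomp (μ : Measure X) (ε δ : ℝ) (ν η : Measure X) : Prop :=
  ∃ νi ηi : ℕ → Measure X,
    (∀ i, νi i ∈ MM μ) ∧ (∀ i, ηi i ∈ MM μ) ∧
    ν = Measure.sum νi ∧ η = Measure.sum ηi ∧
    (∃ S : ℝ, HasSum (fun i => |mass (νi i) - mass (ηi i)|) S ∧ S ≤ δ) ∧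
    (∀ i, Metric.diam (msupp (νi i) ∪ msupp (ηi i)) ≤ ε)

/-- The mass transport metric `d_𝓜`. -/
noncomputable def dM (h : ℝ → ℝ) (μ : Measure X) (ν η : Measure X) : ℝ :=
  sInf {ε : ℝ | 0 < ε ∧ GammaDecomp μ ε (h ε) ν η}

/-- A rectifiable curve in `𝓜` subparametrized by arc-length: a `1`-Lipschitz map
`[0,b] → (𝓜, d_𝓜)`. -/
def IsCurveM (h : ℝ → ℝ) (μ : Measure X) (b : ℝ) (γ : ℝ → Measure X) : Prop :=
  0 ≤ b ∧ (∀ t ∈ Icc (0:ℝ) b, γ t ∈ MM μ) ∧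
  ∀ s ∈ Icc (0:ℝ) b, ∀ t ∈ Icc (0:ℝ) b, dM h μ (γ s) (γ t) ≤ |s - t|

/-- A rectifiable curve in `𝓧 = 𝓜 \ {0}` subparametrized by arc-length. -/
def IsCurveX (h : ℝ → ℝ) (μ : Measure X) (b : ℝ) (γ : ℝ → Measure X) : Prop :=
  IsCurveM h μ b γ ∧ ∀ t ∈ Icc (0:ℝ) b, γ t ≠ 0

/-- The mean value functional `F_f(η) = (1/‖η‖) ∫ f dη`. -/
noncomputable def FfM (f : X → ℝ) (η : Measure X) : ℝ := (∫ x, f x ∂η) / mass η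

/-- `r_F^ε(η)`. -/
noncomputable def rGradE (h : ℝ → ℝ) (μ : Measure X) (F : Measure X → ℝ) (ε : ℝ)
    (η : Measure X) : ℝ≥0∞ :=
  sSup {r : ℝ≥0∞ | ∃ (b : ℝ) (γ : ℝ → Measure X) (s : ℝ),
    IsCurveX h μ b γ ∧ γ 0 = η ∧ 0 < s ∧ s < ε ∧ s < b ∧
    r = ENNReal.ofReal (|F (γ s) - F η| / s)}

/-- The upper gradient `r_F(η) = lim_{ε→0} r_F^ε(η)`. -/
noncomputable def rGrad (h : ℝ → ℝ) (μ : Measure X) (F : Measure X → ℝ)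
    (η : Measure X) : ℝ≥0∞ :=
  ⨅ (ε : ℝ) (_ : 0 < ε), rGradE h μ F ε η

/-- Upper semicontinuous regularization along curves of `g : 𝓧 → [0,∞]`. -/
noncomputable def breveG (h : ℝ → ℝ) (μ : Measure X) (g : Measure X → ℝ≥0∞)
    (η : Measure X) : ℝ≥0∞ :=
  ⨅ (s : ℝ) (_ : 0 < s), sSup {r : ℝ≥0∞ | ∃ (b : ℝ) (γ : ℝ → Measure X) (t : ℝ),
    IsCurveX h μ b γ ∧ γ 0 = η ∧ 0 ≤ t ∧ t < s ∧ t ≤ b ∧ r = g (γ t)}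

/-- `sup { Σᵢ G(ηᵢ)^p ‖ηᵢ‖ }` over finite disjointly supported families in `𝓧`. -/
noncomputable def LpPow (μ : Measure X) (p : ℝ) (G : Measure X → ℝ≥0∞) : ℝ≥0∞ :=
  sSup {r : ℝ≥0∞ | ∃ (k : ℕ) (η : Fin k → Measure X),
    (∀ i, η i ∈ MM μ ∧ η i ≠ 0) ∧
    (∀ i j, i ≠ j → Disjoint (msupp (η i)) (msupp (η j))) ∧
    r = ∑ i, (G (η i)) ^ p * (η i) Set.univ}

/-- The `𝓛^p(𝓧)` norm of `F : 𝓧 → ℝ`. -/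
noncomputable def LpNorm (μ : Measure X) (p : ℝ) (F : Measure X → ℝ) : ℝ≥0∞ :=
  (LpPow μ p (fun η => ENNReal.ofReal |F η|)) ^ (1 / p)

/-- The `𝓛^p(𝓧)` norm for an extended exponent `p ∈ [1,∞]`. -/
noncomputable def LpNormE (μ : Measure X) (p : ℝ≥0∞) (F : Measure X → ℝ) : ℝ≥0∞ :=
  if p = ∞ then ⨆ (η : Measure X) (_ : η ∈ MM μ ∧ η ≠ 0), ENNReal.ofReal |F η|
  else LpNorm μ p.toReal F


lemma isClosed_msupp (ν : Measure X) : IsClosed (msupp ν) := by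
  rw [← isOpen_compl_iff, Metric.isOpen_iff]
  intro x hx
  simp only [msupp, mem_compl_iff, mem_setOf_eq, not_forall] at hx
  obtain ⟨ε, hε, hν⟩ := hx
  have hν0 : ν (Metric.ball x ε) = 0 := le_antisymm (not_lt.1 hν) bot_le
  refine ⟨ε / 2, by linarith, fun y hy => ?_⟩
  simp only [msupp, mem_compl_iff, mem_setOf_eq, not_forall]
  refine ⟨ε / 2, by linarith, fun h => ?_⟩
  have : Metric.ball y (ε / 2) ⊆ Metric.ball x ε := by
    apply Metric.ball_subset_ball'
    rw [Metric.mem_ball] at hy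
    linarith
  exact absurd (lt_of_lt_of_le h (measure_mono this)) (by simp [hν0])

lemma msupp_mono {ν ρ : Measure X} (hle : ν ≤ ρ) : msupp ν ⊆ msupp ρ :=
  fun _ hx ε hε => lt_of_lt_of_le (hx ε hε) (hle _)

lemma msupp_restrict_subset [OpensMeasurableSpace X] (ν : Measure X) (B : Set X) :
    msupp (ν.restrict B) ⊆ closure B := by
  intro x hx
  rw [Metric.mem_closure_iff]
  intro ε hε
  have h := hx ε hε
  rw [Measure.restrict_apply measurableSet_ball] at h
  obtain ⟨b, hb⟩ := nonempty_of_measure_ne_zero h.ne'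
  exact ⟨b, hb.2, by simpa [dist_comm] using Metric.mem_ball.1 hb.1⟩

lemma msupp_withDensity_subset [OpensMeasurableSpace X] (μ : Measure X) (f : X → ℝ≥0∞)
    : msupp (μ.withDensity f) ⊆ closure {x | f x ≠ 0} := by
  intro x hx
  rw [Metric.mem_closure_iff]
  intro ε hε
  by_contra hcon
  push_neg at hcon
  have hzero : ∀ y ∈ Metric.ball x ε, f y = 0 := by
    intro y hy
    by_contra hfy
    exact absurd (hcon y hfy) (not_le.2 (by simpa [dist_comm] using Metric.mem_ball.1 hy))
  have h := hx ε hε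
  rw [withDensity_apply _ measurableSet_ball,
    setLIntegral_congr_fun measurableSet_ball (fun y hy => hzero y hy),
    lintegral_zero] at h
  exact lt_irrefl _ h

/-- Mass-preserving (up to the factor `c`) homeomorphisms moving points
at most `t` move measures at most `t` in `d_𝓜`. -/
theorem stmt7 {X : Type*} [MetricSpace X] [MeasurableSpace X] [BorelSpace X]
    [LocallyCompactSpace X] [TopologicalSpace.SeparableSpace X]
    (μ : Measure X) [μ.Regular]
    (hμ : ∀ (x : X) (r : ℝ), 0 < r → 0 < μ (Metric.ball x r) ∧ μ (Metric.ball x r) < ⊤)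
    (h : ℝ → ℝ) (hh : IsGauge h)
    (H : X ≃ₜ X) (c : ℝ) (hc : c ∈ Ioc (0:ℝ) 1)
    (hpres : ∀ K : Set X, IsCompact K → μ K = ENNReal.ofReal c * μ (H ⁻¹' K))
    (t : ℝ) (ht : 0 ≤ t) (hmove : ∀ x : X, dist x (H.symm x) ≤ t)
    (φ : X → ℝ) (hφm : Measurable φ) (hφ01 : ∀ x, φ x ∈ Icc (0:ℝ) 1)
    (hφc : IsCompact (Metric.cthickening t (tsupport φ))) :
    μ.withDensity (fun x => ENNReal.ofReal (c * φ (H x))) ∈ MM μ ∧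
    μ.withDensity (fun x => ENNReal.ofReal (φ x)) ∈ MM μ ∧
    dM h μ (μ.withDensity (fun x => ENNReal.ofReal (c * φ (H x))))
      (μ.withDensity (fun x => ENNReal.ofReal (φ x))) ≤ t := by
  haveI : SecondCountableTopology X := UniformSpace.secondCountable_of_separable X
  obtain ⟨hc0, hc1⟩ := hc
  have hφ0 : ∀ x, 0 ≤ φ x := fun x => (hφ01 x).1
  have hφ1 : ∀ x, φ x ≤ 1 := fun x => (hφ01 x).2
  set K : Set X := Metric.cthickening t (tsupport φ) with hKdef
  set ν := μ.withDensity (fun x => ENNReal.ofReal (c * φ (H x))) with hνdef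
  set η := μ.withDensity (fun x => ENNReal.ofReal (φ x)) with hηdef
  have hmφ : Measurable fun x => ENNReal.ofReal (φ x) := hφm.ennreal_ofReal
  have hmφH : Measurable fun x => ENNReal.ofReal (φ (H x)) :=
    (hφm.comp H.continuous.measurable).ennreal_ofReal
  -- domination
  have hle : ∀ f : X → ℝ≥0∞, (∀ x, f x ≤ 1) → μ.withDensity f ≤ μ := by
    intro f hf
    refine Measure.le_iff.2 fun s hs => ?_
    rw [withDensity_apply _ hs]
    calc ∫⁻ x in s, f x ∂μ ≤ ∫⁻ _ in s, 1 ∂μ := lintegral_mono hf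
      _ = μ s := setLIntegral_one s
  have hνle : ν ≤ μ := by
    refine hle _ fun x => ?_
    rw [show (1 : ℝ≥0∞) = ENNReal.ofReal 1 by simp]
    exact ENNReal.ofReal_le_ofReal (mul_le_one₀ hc1 (hφ0 _) (hφ1 _))
  have hηle : η ≤ μ := by
    refine hle _ fun x => ?_
    rw [show (1 : ℝ≥0∞) = ENNReal.ofReal 1 by simp]
    exact ENNReal.ofReal_le_ofReal (hφ1 _)
  -- supports
  have hKclosed : IsClosed K := Metric.isClosed_cthickening
  have hsubη : msupp η ⊆ K := by
    refine (msupp_withDensity_subset μ _).trans ?_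
    rw [← hKclosed.closure_eq]
    refine closure_mono fun x hx => ?_
    have : φ x ≠ 0 := fun h0 => hx (by simp [h0])
    exact Metric.self_subset_cthickening _ (subset_tsupport φ this)
  have hpreK : H ⁻¹' (tsupport φ) ⊆ K := by
    intro y hy
    refine Metric.mem_cthickening_of_dist_le y (H y) t _ hy ?_
    have := hmove (H y)
    rwa [H.symm_apply_apply, dist_comm] at this
  have hsubν : msupp ν ⊆ K := by
    refine (msupp_withDensity_subset μ _).trans ?_
    rw [← hKclosed.closure_eq]
    refine closure_mono fun x hx => ?_
    have : φ (H x) ≠ 0 := fun h0 => hx (by simp [h0])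
    exact hpreK (subset_tsupport φ this)
  have hνMM : ν ∈ MM μ := ⟨hνle, hφc.of_isClosed_subset (isClosed_msupp _) hsubν⟩
  have hηMM : η ∈ MM μ := ⟨hηle, hφc.of_isClosed_subset (isClosed_msupp _) hsubη⟩
  refine ⟨hνMM, hηMM, ?_⟩
  -- the measure identity μ = c • map H μ
  have hAeq : μ = (ENNReal.ofReal c) • Measure.map (⇑H) μ := by
    haveI : (Measure.map (⇑H) μ).InnerRegular := Measure.InnerRegular.map H
    ext s hs
    rw [hs.measure_eq_iSup_isCompact, hs.measure_eq_iSup_isCompact]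
    refine iSup_congr fun Kc => iSup_congr fun _ => iSup_congr fun hKc => ?_
    rw [hpres Kc hKc, Measure.smul_apply, smul_eq_mul,
      Measure.map_apply H.continuous.measurable hKc.isClosed.measurableSet]
  have key : ∀ S : Set X, MeasurableSet S → ν (H ⁻¹' S) = η S := by
    intro S hS
    rw [hνdef, hηdef, withDensity_apply _ (hS.preimage H.continuous.measurable),
      withDensity_apply _ hS]
    calc ∫⁻ x in H ⁻¹' S, ENNReal.ofReal (c * φ (H x)) ∂μ
        = ∫⁻ x in H ⁻¹' S, ENNReal.ofReal c * ENNReal.ofReal (φ (H x)) ∂μ := by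
          simp_rw [ENNReal.ofReal_mul hc0.le]
      _ = ENNReal.ofReal c * ∫⁻ x in H ⁻¹' S, ENNReal.ofReal (φ (H x)) ∂μ :=
          lintegral_const_mul _ hmφH
      _ = ∫⁻ x in S, ENNReal.ofReal (φ x) ∂μ := by
          conv_rhs => rw [hAeq]
          rw [Measure.restrict_smul, lintegral_smul_measure,
            Measure.restrict_map H.continuous.measurable hS,
            lintegral_map hmφ H.continuous.measurable, smul_eq_mul]
  -- gauge nonnegativity
  have hgauge : ∀ ε : ℝ, 0 < ε → 0 ≤ h ε := by
    intro ε hε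
    have := hh.1 (mem_Ici.2 le_rfl) (le_of_lt hε : (0:ℝ) ≤ ε) hε
    rw [hh.2.2.1] at this
    exact this.le
  -- decompositions for every ε > t
  have hdecomp : ∀ ε : ℝ, t < ε → GammaDecomp μ ε (h ε) ν η := by
    intro ε htε
    have hε0 : 0 < ε := lt_of_le_of_lt ht htε
    by_cases hX : Nonempty X
    · obtain ⟨u, hu⟩ : ∃ u : ℕ → X, DenseRange u :=
        ⟨TopologicalSpace.denseSeq X, TopologicalSpace.denseRange_denseSeq X⟩
      set δ := ε - t with hδdef
      have hδ : 0 < δ := sub_pos.2 htε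
      set A : ℕ → Set X := disjointed (fun j => Metric.ball (u j) (δ / 2)) with hAdef
      have hAmeas : ∀ j, MeasurableSet (A j) :=
        MeasurableSet.disjointed fun j => measurableSet_ball
      have hAdisj : Pairwise (Function.onFun Disjoint A) := disjoint_disjointed _
      have hAsub : ∀ j, A j ⊆ Metric.ball (u j) (δ / 2) := fun j => disjointed_subset _ _
      have hAcover : ⋃ j, A j = univ := by
        rw [hAdef, iUnion_disjointed]
        refine eq_univ_of_forall fun x => ?_
        obtain ⟨j, hj⟩ := hu.exists_dist_lt x (by linarith : (0:ℝ) < δ / 2)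
        exact mem_iUnion.2 ⟨j, Metric.mem_ball.2 hj⟩
      set e : ℕ ≃ ℕ × ℕ := (Denumerable.eqv (ℕ × ℕ)).symm with hedef
      set B : ℕ × ℕ → Set X := fun p => A p.2 ∩ H ⁻¹' (A p.1) with hBdef
      set C : ℕ × ℕ → Set X := fun p => A p.1 ∩ H.symm ⁻¹' (A p.2) with hCdef
      have hBmeas : ∀ p, MeasurableSet (B p) := fun p =>
        (hAmeas p.2).inter ((hAmeas p.1).preimage H.continuous.measurable)
      have hCmeas : ∀ p, MeasurableSet (C p) := fun p =>
        (hAmeas p.1).inter ((hAmeas p.2).preimage H.symm.continuous.measurable)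
      have hBdisj : Pairwise (Function.onFun Disjoint B) := by
        intro p q hpq
        rcases (Prod.ext_iff.not.1 hpq |> not_and_or.1) with h1 | h2
        · exact ((hAdisj h1).preimage ⇑H).mono inter_subset_right inter_subset_right
        · exact (hAdisj h2).mono inter_subset_left inter_subset_left
      have hCdisj : Pairwise (Function.onFun Disjoint C) := by
        intro p q hpq
        rcases (Prod.ext_iff.not.1 hpq |> not_and_or.1) with h1 | h2
        · exact (hAdisj h1).mono inter_subset_left inter_subset_left
        · exact ((hAdisj h2).preimage ⇑H.symm).mono inter_subset_right inter_subset_right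
      have hBcover : ⋃ p, B p = univ := by
        refine eq_univ_of_forall fun x => ?_
        have hx1 := hAcover ▸ mem_univ x
        obtain ⟨j, hj⟩ := mem_iUnion.1 (hAcover.symm ▸ (mem_univ x))
        obtain ⟨i, hi⟩ := mem_iUnion.1 (hAcover.symm ▸ (mem_univ (H x)))
        exact mem_iUnion.2 ⟨(i, j), hj, hi⟩
      have hCcover : ⋃ p, C p = univ := by
        refine eq_univ_of_forall fun x => ?_
        obtain ⟨i, hi⟩ := mem_iUnion.1 (hAcover.symm ▸ (mem_univ x))
        obtain ⟨j, hj⟩ := mem_iUnion.1 (hAcover.symm ▸ (mem_univ (H.symm x)))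
        exact mem_iUnion.2 ⟨(i, j), hi, hj⟩
      have hpreim : ∀ p, H ⁻¹' (C p) = B p := by
        intro p
        ext x
        simp only [hBdef, hCdef, mem_preimage, mem_inter_iff, H.symm_apply_apply]
        tauto
      -- sum decomposition lemma
      have hsum : ∀ (ρ : Measure X) (D : ℕ × ℕ → Set X), (∀ p, MeasurableSet (D p)) →
          Pairwise (Function.onFun Disjoint D) → (⋃ p, D p) = univ →
          ρ = Measure.sum (fun n => ρ.restrict (D (e n))) := by
        intro ρ D hm hd hcov
        ext s hs
        rw [Measure.sum_apply _ hs]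
        simp_rw [Measure.restrict_apply hs]
        rw [Equiv.tsum_eq e (fun p => ρ (s ∩ D p)),
          ← measure_iUnion (fun p q hpq => (hd hpq).mono inter_subset_right inter_subset_right)
            (fun p => hs.inter (hm p)),
          ← inter_iUnion, hcov, inter_univ]
      refine ⟨fun n => ν.restrict (B (e n)), fun n => η.restrict (C (e n)), ?_, ?_, ?_, ?_, ?_, ?_⟩
      · intro n
        refine ⟨(Measure.restrict_le_self).trans hνle, ?_⟩
        exact hφc.of_isClosed_subset (isClosed_msupp _)
          ((msupp_mono Measure.restrict_le_self).trans hsubν)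
      · intro n
        refine ⟨(Measure.restrict_le_self).trans hηle, ?_⟩
        exact hφc.of_isClosed_subset (isClosed_msupp _)
          ((msupp_mono Measure.restrict_le_self).trans hsubη)
      · exact hsum ν B hBmeas hBdisj hBcover
      · exact hsum η C hCmeas hCdisj hCcover
      · refine ⟨0, ?_, hgauge ε hε0⟩
        have : (fun n => |mass (ν.restrict (B (e n))) - mass (η.restrict (C (e n)))|)
            = fun _ => (0 : ℝ) := by
          funext n
          have hm : ν (B (e n)) = η (C (e n)) := by
            rw [← hpreim (e n)]; exact key _ (hCmeas _)
          simp [mass, Measure.restrict_apply_univ, hm]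
        rw [this]
        exact hasSum_zero
      · intro n
        set p := e n with hp
        have hBsub : B p ⊆ Metric.ball (u p.2) (δ / 2) := fun x hx => hAsub _ hx.1
        have hCsub : C p ⊆ Metric.ball (u p.1) (δ / 2) := fun x hx => hAsub _ hx.1
        have hBC : ∀ x ∈ B p, ∀ y ∈ C p, dist x y ≤ ε := by
          intro x hx y hy
          have h1 : dist x (H.symm y) ≤ δ := by
            have hx2 : x ∈ Metric.ball (u p.2) (δ / 2) := hBsub hx
            have hy2 : H.symm y ∈ Metric.ball (u p.2) (δ / 2) := hAsub _ hy.2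
            rw [Metric.mem_ball] at hx2 hy2
            calc dist x (H.symm y) ≤ dist x (u p.2) + dist (H.symm y) (u p.2) :=
              dist_triangle_right _ _ _
              _ ≤ δ := by linarith
          calc dist x y ≤ dist x (H.symm y) + dist (H.symm y) y := dist_triangle _ _ _
            _ ≤ δ + t := add_le_add h1 (by rw [dist_comm]; exact hmove y)
            _ = ε := by rw [hδdef]; ring
        have hbound : ∀ x ∈ B p ∪ C p, ∀ y ∈ B p ∪ C p, dist x y ≤ ε := by
          intro x hx y hy
          rcases hx with hx | hx <;> rcases hy with hy | hy
          · have hx2 := Metric.mem_ball.1 (hBsub hx)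
            have hy2 := Metric.mem_ball.1 (hBsub hy)
            calc dist x y ≤ dist x (u p.2) + dist y (u p.2) := dist_triangle_right _ _ _
              _ ≤ ε := by linarith
          · exact hBC x hx y hy
          · rw [dist_comm]; exact hBC y hy x hx
          · have hx2 := Metric.mem_ball.1 (hCsub hx)
            have hy2 := Metric.mem_ball.1 (hCsub hy)
            calc dist x y ≤ dist x (u p.1) + dist y (u p.1) := dist_triangle_right _ _ _
              _ ≤ ε := by linarith
        have hBdd : Bornology.IsBounded (B p ∪ C p) :=
          (Metric.isBounded_ball.subset hBsub).union (Metric.isBounded_ball.subset hCsub)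
        have hsupsub : msupp (ν.restrict (B p)) ∪ msupp (η.restrict (C p)) ⊆
            closure (B p ∪ C p) :=
          union_subset
            ((msupp_restrict_subset ν (B p)).trans (closure_mono subset_union_left))
            ((msupp_restrict_subset η (C p)).trans (closure_mono subset_union_right))
        calc Metric.diam (msupp (ν.restrict (B (e n))) ∪ msupp (η.restrict (C (e n))))
            ≤ Metric.diam (closure (B p ∪ C p)) := Metric.diam_mono hsupsub hBdd.closure
          _ = Metric.diam (B p ∪ C p) := Metric.diam_closure _
          _ ≤ ε := Metric.diam_le_of_forall_dist_le hε0.le hbound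
    · -- X is empty
      haveI hXe : IsEmpty X := not_nonempty_iff.1 hX
      have hzero : ∀ ρ : Measure X, ρ = 0 := by
        intro ρ
        ext s hs
        rw [Set.eq_empty_of_isEmpty s]
        simp
      have hMM0 : (0 : Measure X) ∈ MM μ := by
        refine ⟨Measure.zero_le μ, ?_⟩
        rw [Set.eq_empty_of_isEmpty (msupp (0 : Measure X))]
        exact isCompact_empty
      refine ⟨fun _ => 0, fun _ => 0, fun _ => hMM0, fun _ => hMM0, ?_, ?_, ?_, ?_⟩
      · rw [hzero ν]; ext s hs; simp [Measure.sum_apply _ hs]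
      · rw [hzero η]; ext s hs; simp [Measure.sum_apply _ hs]
      · exact ⟨0, by simpa [mass] using hasSum_zero, hgauge ε hε0⟩
      · intro i
        rw [Set.eq_empty_of_isEmpty (msupp (0:Measure X) ∪ msupp (0:Measure X))]
        simpa using hε0.le
  -- conclude
  have hsubset : Ioi t ⊆ {ε : ℝ | 0 < ε ∧ GammaDecomp μ ε (h ε) ν η} :=
    fun ε hε => ⟨lt_of_le_of_lt ht hε, hdecomp ε hε⟩
  calc dM h μ ν η ≤ sInf (Ioi t) := by
        refine csInf_le_csInf ⟨0, fun x hx => hx.1.le⟩ ⟨t + 1, by simp⟩ hsubset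
    _ = t := csInf_Ioi
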